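/- There exists a universal constant C > 0 such that for every positive integer n and every integral lattice L ⊂ ℝ^n, the Gaussian mass ∑_{y ∈ L} exp(−τ* · ‖y‖²) with τ* := 2·log(2n) satisfies ∑_{y ∈ L} exp(−τ* ‖y‖²) ≤ 1 + C/n (in particular the sum converges). -/

import Mathlib

open Finset Submodule
open scoped RealInnerProductSpace

namespace IntegralGaussAux


abbrev V (n : ℕ) := EuclideanSpace ℝ (Fin n)

def mon {n : ℕ} (l : List (Fin n)) : V n → ℝ := fun x => (l.map (fun i => x i)).prod

abbrev MIdx (n d : ℕ) := Σ j : Fin d, (Fin (j : ℕ) → Fin n)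

def MFun (n d : ℕ) : MIdx n d → (V n → ℝ) := fun p x => ∏ i, x (p.2 i)

def Sset (n j : ℕ) : Set (V n → ℝ) := {g | ∃ l : List (Fin n), l.length ≤ j ∧ g = mon l}


lemma mon_mem {n : ℕ} (d : ℕ) (l : List (Fin n)) (hl : l.length < d) :
    mon l ∈ span ℝ (Set.range (MFun n d)) := by
  apply subset_span
  refine ⟨⟨⟨l.length, hl⟩, fun i => l.get i⟩, ?_⟩
  funext x
  show ∏ i : Fin l.length, x (l.get i) = (l.map (fun i => x i)).prod
  conv_rhs => rw [← List.ofFn_get l]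
  rw [List.map_ofFn, List.prod_ofFn]
  rfl

lemma inner_apply' {n : ℕ} (u x : V n) : ⟪u, x⟫ = ∑ i, u i * x i := by
  simp [PiLp.inner_apply, RCLike.inner_apply]
  exact Finset.sum_congr rfl (fun _ _ => mul_comm _ _)

lemma step_mem {n : ℕ} (u : V n) (c : ℝ) (j : ℕ) (f : V n → ℝ)
    (hf : f ∈ span ℝ (Sset n j)) :
    (fun x => (⟪u, x⟫ - c) * f x) ∈ span ℝ (Sset n (j + 1)) := by
  induction hf using Submodule.span_induction with
  | mem g hg =>
      obtain ⟨l, hl, rfl⟩ := hg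
      have hfun : (fun x => (⟪u, x⟫ - c) * mon l x)
          = (∑ i : Fin n, u i • mon (i :: l)) - c • mon l := by
        funext x
        simp only [Finset.sum_apply, Pi.sub_apply, Pi.smul_apply, smul_eq_mul, mon,
          List.map_cons, List.prod_cons, inner_apply']
        rw [sub_mul, Finset.sum_mul]
        simp [mul_assoc]
      rw [hfun]
      refine sub_mem (sum_mem fun i _ => smul_mem _ _ (subset_span ?_))
        (smul_mem _ _ (subset_span ?_))
      · exact ⟨i :: l, by simpa using Nat.succ_le_succ hl, rfl⟩
      · exact ⟨l, by omega, rfl⟩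
  | zero =>
      have : (fun x => (⟪u, x⟫ - c) * (0 : V n → ℝ) x) = 0 := by
        funext x; simp
      rw [this]; exact zero_mem _
  | add g h hg hh ihg ihh =>
      have : (fun x => (⟪u, x⟫ - c) * (g + h) x)
          = (fun x => (⟪u, x⟫ - c) * g x) + fun x => (⟪u, x⟫ - c) * h x := by
        funext x; simp [Pi.add_apply]; ring
      rw [this]; exact add_mem ihg ihh
  | smul a g hg ihg =>
      have : (fun x => (⟪u, x⟫ - c) * (a • g) x)
          = a • fun x => (⟪u, x⟫ - c) * g x := by
        funext x; simp [Pi.smul_apply, smul_eq_mul]; ring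
      rw [this]; exact smul_mem _ _ ihg

lemma prodT_mem {n : ℕ} (u : V n) (T : Finset ℤ) :
    (fun x => ∏ t ∈ T, (⟪u, x⟫ - (t : ℝ))) ∈ span ℝ (Sset n T.card) := by
  classical
  induction T using Finset.induction with
  | empty =>
      refine subset_span ⟨[], by simp, ?_⟩
      funext x; simp [mon]
  | @insert a s ha ih =>
      have hfun : (fun x => ∏ t ∈ insert a s, (⟪u, x⟫ - (t : ℝ)))
          = fun x => (⟪u, x⟫ - (a : ℝ)) * ∏ t ∈ s, (⟪u, x⟫ - (t : ℝ)) := by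
        funext x; rw [Finset.prod_insert ha]
      rw [hfun, Finset.card_insert_of_notMem ha]
      exact step_mem u _ _ _ ih










lemma shell_card {n k : ℕ} (hk : 1 ≤ k) (Q : Finset (V n))
    (hnorm : ∀ u ∈ Q, ⟪u, u⟫ = (k : ℝ))
    (hint : ∀ u ∈ Q, ∀ w ∈ Q, ∃ m : ℤ, ⟪u, w⟫ = (m : ℝ))
    (hnn : ∀ u ∈ Q, ∀ w ∈ Q, u ≠ w → u ≠ -w) :
    Q.card ≤ ∑ j ∈ Finset.range (2 * k), n ^ j := by
  classical
  set d := 2 * k with hd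
  set T : Finset ℤ := Finset.Icc (1 - (k : ℤ)) ((k : ℤ) - 1) with hT
  set G : V n → V n → ℝ := fun u x => ∏ t ∈ T, (⟪u, x⟫ - (t : ℝ)) with hG
  set W : Submodule ℝ (V n → ℝ) := span ℝ (Set.range (MFun n d)) with hW
  -- each G u lies in W
  have hcardT : T.card < d := by
    rw [hT, Int.card_Icc]; omega
  have hGmem : ∀ u : V n, G u ∈ W := by
    intro u
    have h1 := prodT_mem u T
    have h2 : span ℝ (Sset n T.card) ≤ W := by
      rw [Submodule.span_le]
      rintro g ⟨l, hl, rfl⟩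
      exact mon_mem d l (lt_of_le_of_lt hl hcardT)
    exact h2 h1
  -- diagonal is nonzero
  have hdiag : ∀ u ∈ Q, G u u ≠ 0 := by
    intro u hu
    rw [hG]
    rw [Finset.prod_ne_zero_iff]
    intro t ht
    rw [hnorm u hu]
    have ht' : t ≤ (k : ℤ) - 1 := (Finset.mem_Icc.1 ht).2
    have : (t : ℝ) < (k : ℝ) := by exact_mod_cast (by omega : t < (k : ℤ))
    intro h
    rw [sub_eq_zero] at h
    exact absurd h.symm (ne_of_lt this)
  -- off-diagonal vanishes
  have hoff : ∀ u ∈ Q, ∀ w ∈ Q, u ≠ w → G u w = 0 := by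
    intro u hu w hw huw
    obtain ⟨m, hm⟩ := hint u hu w hw
    have e1 : ⟪u - w, u - w⟫ = 2 * (k : ℝ) - 2 * m := by
      rw [inner_sub_sub_self, hnorm u hu, hnorm w hw, real_inner_comm u w, hm]; ring
    have e2 : ⟪u + w, u + w⟫ = 2 * (k : ℝ) + 2 * m := by
      rw [inner_add_add_self, hnorm u hu, hnorm w hw, real_inner_comm u w, hm]; ring
    have p1 : (0 : ℝ) ≤ 2 * (k : ℝ) - 2 * m := e1 ▸ real_inner_self_nonneg
    have p2 : (0 : ℝ) ≤ 2 * (k : ℝ) + 2 * m := e2 ▸ real_inner_self_nonneg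
    have hmk : m ≤ (k : ℤ) := by exact_mod_cast (by linarith : (m : ℝ) ≤ (k : ℝ))
    have hmk' : -(k : ℤ) ≤ m := by exact_mod_cast (by linarith : -(k : ℝ) ≤ (m : ℝ))
    have hne1 : m ≠ (k : ℤ) := by
      intro h
      have : ⟪u - w, u - w⟫ = 0 := by rw [e1, h]; push_cast; ring
      rw [inner_self_eq_zero, sub_eq_zero] at this
      exact huw this
    have hne2 : m ≠ -(k : ℤ) := by
      intro h
      have : ⟪u + w, u + w⟫ = 0 := by rw [e2, h]; push_cast; ring
      rw [inner_self_eq_zero, add_eq_zero_iff_eq_neg] at this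
      exact hnn u hu w hw huw this
    have hmem : m ∈ T := by rw [hT, Finset.mem_Icc]; omega
    refine Finset.prod_eq_zero hmem ?_
    rw [hm, sub_self]
  -- linear independence
  have li : LinearIndependent ℝ (fun u : ↥Q => G ↑u) := by
    rw [linearIndependent_iff']
    intro s g hsum i hi
    have := congrFun hsum (i : V n)
    simp only [Finset.sum_apply, Pi.smul_apply, smul_eq_mul, Pi.zero_apply] at this
    rw [Finset.sum_eq_single i (fun b _ hb => by
        rw [hoff _ b.2 _ i.2 (fun h => hb (Subtype.ext h)), mul_zero])
      (fun h => absurd hi h)] at this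
    exact (mul_eq_zero.1 this).resolve_right (hdiag _ i.2)
  -- conclude via finrank
  haveI : FiniteDimensional ℝ ↥W := FiniteDimensional.span_of_finite ℝ (Set.finite_range _)
  have li' : LinearIndependent ℝ (fun u : ↥Q => (⟨G ↑u, hGmem ↑u⟩ : ↥W)) := by
    apply LinearIndependent.of_comp W.subtype
    convert li
    rfl
  have hcard := li'.fintype_card_le_finrank
  rw [Fintype.card_coe] at hcard
  have hrange : Set.range (MFun n d) = ↑(Finset.image (MFun n d) Finset.univ) := by
    simp
  have hfr : Module.finrank ℝ ↥W ≤ Fintype.card (MIdx n d) := by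
    rw [hW, hrange]
    exact le_trans (finrank_span_finset_le_card _)
      (le_trans (Finset.card_image_le) (by rw [Finset.card_univ]))
  have hcount : Fintype.card (MIdx n d) = ∑ j ∈ Finset.range d, n ^ j := by
    rw [Fintype.card_sigma]
    rw [← Fin.sum_univ_eq_sum_range (fun j => n ^ j) d]
    congr 1; funext j
    rw [Fintype.card_fun]; simp
  omega




lemma halve {n : ℕ} (k : ℕ) (L : AddSubgroup (V n)) :
    ∀ F : Finset (V n), (∀ y ∈ F, y ∈ L ∧ ⟪y, y⟫ = (k : ℝ)) →
    ∃ Q : Finset (V n),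
      F.card ≤ 2 * Q.card ∧
      (∀ u ∈ Q, u ∈ L ∧ ⟪u, u⟫ = (k : ℝ)) ∧
      (∀ u ∈ Q, u ∈ F ∨ -u ∈ F) ∧
      (∀ u ∈ Q, ∀ w ∈ Q, u ≠ w → u ≠ -w) := by
  classical
  intro F
  induction F using Finset.strongInduction with
  | _ F ih =>
    intro hF
    rcases F.eq_empty_or_nonempty with rfl | ⟨y, hy⟩
    · exact ⟨∅, by simp⟩
    · set F' : Finset (V n) := (F.erase y).erase (-y) with hF'
      have hsub : F' ⊂ F :=
        lt_of_le_of_lt (Finset.erase_subset _ _) (Finset.erase_ssubset hy)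
      obtain ⟨Q', hc, hp2, hp3, hp4⟩ := ih F' hsub (fun z hz => hF z (hsub.1 hz))
      have hyF' : y ∉ F' := fun h => (Finset.mem_erase.1 ((Finset.mem_erase.1 h).2)).1 rfl
      have hnyF' : -y ∉ F' := fun h => (Finset.mem_erase.1 h).1 rfl
      have hyQ' : y ∉ Q' := by
        intro h
        rcases hp3 y h with h' | h'
        · exact hyF' h'
        · exact hnyF' h'
      refine ⟨insert y Q', ?_, ?_, ?_, ?_⟩
      · have h1 : F ⊆ insert y (insert (-y) F') := by
          intro z hz
          simp only [Finset.mem_insert, hF', Finset.mem_erase]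
          by_cases h2 : z = y
          · exact Or.inl h2
          · by_cases h3 : z = -y
            · exact Or.inr (Or.inl h3)
            · exact Or.inr (Or.inr ⟨h3, h2, hz⟩)
        have h2 := Finset.card_le_card h1
        have h3 := Finset.card_insert_le (-y) F'
        have h4 := Finset.card_insert_le y (insert (-y) F')
        rw [Finset.card_insert_of_notMem hyQ']
        omega
      · intro u hu
        rcases Finset.mem_insert.1 hu with rfl | hu'
        · exact hF u hy
        · exact hp2 u hu'
      · intro u hu
        rcases Finset.mem_insert.1 hu with rfl | hu'
        · exact Or.inl hy
        · rcases hp3 u hu' with h | h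
          · exact Or.inl (hsub.1 h)
          · exact Or.inr (hsub.1 h)
      · intro u hu w hw huw
        rcases Finset.mem_insert.1 hu with rfl | hu'
        · rcases Finset.mem_insert.1 hw with rfl | hw'
          · exact absurd rfl huw
          · intro h
            have hwu : w = -u := by rw [h, neg_neg]
            rcases hp3 w hw' with h' | h'
            · exact hnyF' (hwu ▸ h')
            · exact hyF' (by rwa [← h] at h')
        · rcases Finset.mem_insert.1 hw with rfl | hw'
          · intro h
            rcases hp3 u hu' with h' | h'
            · exact hnyF' (h ▸ h')
            · exact hyF' (by rwa [h, neg_neg] at h')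
          · exact hp4 u hu' w hw' huw




lemma arith (n k : ℕ) (hn : 0 < n) (hk : 1 ≤ k) :
    (4 * (k:ℝ) * (n:ℝ)^(2*k-1)) * (((2*(n:ℝ))^2)⁻¹)^k ≤ 4 * (1/2:ℝ)^k / (n:ℝ) := by
  have hnp : (0:ℝ) < (n:ℝ) := by exact_mod_cast hn
  have e : 2*k-1 + 1 = 2*k := by omega
  have h1 : ((2*(n:ℝ))^2) = 4*(n:ℝ)^2 := by ring
  rw [h1, inv_pow, ← div_eq_mul_inv, div_le_div_iff₀ (by positivity) hnp]
  have hXk : (4*(n:ℝ)^2)^k = 4^k * (n:ℝ)^(2*k) := by rw [mul_pow, ← pow_mul]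
  have hhalf : (1/2:ℝ)^k * 4^k = 2^k := by rw [← mul_pow]; norm_num
  have key : (4:ℝ)*(1/2)^k*(4*(n:ℝ)^2)^k = 4*2^k*(n:ℝ)^(2*k) := by
    rw [hXk, ← hhalf]; ring
  rw [key]
  have hL : 4*(k:ℝ)*(n:ℝ)^(2*k-1)*(n:ℝ) = 4*(k:ℝ)*(n:ℝ)^(2*k) := by
    rw [mul_assoc, ← pow_succ, e]
  rw [hL]
  have hk2 : (k:ℝ) ≤ 2^k := by exact_mod_cast (Nat.lt_two_pow_self (n := k)).le
  have hp : (0:ℝ) < (n:ℝ)^(2*k) := by positivity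
  nlinarith [hk2, hp]










lemma sum_bound (n : ℕ) (hn : 0 < n) (L : AddSubgroup (V n))
    (hint : ∀ x ∈ L, ∀ y ∈ L, ∃ m : ℤ, (inner ℝ x y : ℝ) = (m : ℝ))
    (G : Finset ↥L) :
    ∑ y ∈ G, Real.exp (-(2 * Real.log (2 * n)) * ‖(y : V n)‖ ^ 2) ≤ 1 + 4 / n := by
  classical
  set τ : ℝ := 2 * Real.log (2 * n) with hτ
  set φ : V n → ℝ := fun v => Real.exp (-τ * ‖v‖ ^ 2) with hφ
  have hnp : (0:ℝ) < (n:ℝ) := by exact_mod_cast hn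
  have h2n : (0:ℝ) < 2 * (n:ℝ) := by positivity
  have hq : Real.exp (-τ) = ((2*(n:ℝ))^2)⁻¹ := by
    rw [hτ, Real.exp_neg]
    congr 1
    rw [two_mul, Real.exp_add, Real.exp_log h2n, sq]
  set G' := G.image (fun y : ↥L => (y : V n)) with hG'
  have himg : ∑ y ∈ G, φ (y : V n) = ∑ v ∈ G', φ v := by
    rw [hG', Finset.sum_image (fun x _ y _ h => Subtype.ext h)]
  set F := G'.erase 0 with hFdef
  have hsplit : ∑ v ∈ G', φ v ≤ ∑ v ∈ F, φ v + 1 := by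
    by_cases h0 : (0 : V n) ∈ G'
    · rw [← Finset.sum_erase_add G' φ h0]
      have : φ 0 = 1 := by simp [hφ]
      rw [this]
    · rw [hFdef, Finset.erase_eq_of_notMem h0]
      exact le_add_of_nonneg_right zero_le_one
  -- membership facts for F
  have hFmem : ∀ v ∈ F, v ∈ L ∧ v ≠ 0 := by
    intro v hv
    rw [hFdef, Finset.mem_erase] at hv
    obtain ⟨hv0, hvG⟩ := hv
    rw [hG', Finset.mem_image] at hvG
    obtain ⟨y, _, rfl⟩ := hvG
    exact ⟨y.2, hv0⟩
  set ν : V n → ℕ := fun v => ⌊‖v‖^2⌋₊ with hν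
  have hνF : ∀ v ∈ F, 1 ≤ ν v ∧ ⟪v, v⟫ = ((ν v : ℕ) : ℝ) := by
    intro v hv
    obtain ⟨hvL, hv0⟩ := hFmem v hv
    obtain ⟨m, hm⟩ := hint v hvL v hvL
    have hpos : (0:ℝ) < ⟪v, v⟫ := by
      rw [real_inner_self_eq_norm_sq]
      exact pow_pos (norm_pos_iff.mpr hv0) 2
    have hm0 : 0 < m := by exact_mod_cast hm ▸ hpos
    have hcast : ((m.toNat : ℕ) : ℝ) = (m : ℝ) := by
      exact_mod_cast congrArg (Int.cast : ℤ → ℝ) (Int.toNat_of_nonneg hm0.le)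
    have hns : ‖v‖^2 = ((m.toNat : ℕ) : ℝ) := by
      rw [← real_inner_self_eq_norm_sq, hm, hcast]
    have hνv : ν v = m.toNat := by
      show ⌊‖v‖^2⌋₊ = m.toNat
      rw [hns, Nat.floor_natCast]
    constructor
    · rw [hνv]; omega
    · rw [real_inner_self_eq_norm_sq, hns, hνv]
  -- fiberwise decomposition
  set S := F.image ν with hS
  have hfib := Finset.sum_fiberwise_of_maps_to (s := F) (t := S)
    (fun v hv => Finset.mem_image_of_mem ν hv) φ
  have h0S : (0:ℕ) ∉ S := by
    intro h
    obtain ⟨v0, hv0F, hv0k⟩ := Finset.mem_image.1 h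
    have := (hνF v0 hv0F).1
    omega
  have hfiber_bound : ∀ k ∈ S, ∑ v ∈ F.filter (fun v => ν v = k), φ v ≤ 4 * (1/2:ℝ)^k / n := by
    intro k hkS
    obtain ⟨v0, hv0F, hv0k⟩ := Finset.mem_image.1 hkS
    have hk1 : 1 ≤ k := hv0k ▸ (hνF v0 hv0F).1
    set Fk := F.filter (fun v => ν v = k) with hFk
    have hFkmem : ∀ y ∈ Fk, y ∈ L ∧ ⟪y, y⟫ = (k:ℝ) := by
      intro y hy
      rw [hFk, Finset.mem_filter] at hy
      obtain ⟨hyF, hyk⟩ := hy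
      exact ⟨(hFmem y hyF).1, by rw [(hνF y hyF).2, hyk]⟩
    obtain ⟨Q, hc, hp2, hp3, hp4⟩ := halve k L Fk hFkmem
    have hQ := shell_card hk1 Q (fun u hu => (hp2 u hu).2)
      (fun u hu w hw => hint u (hp2 u hu).1 w (hp2 w hw).1) hp4
    have hgeom : ∑ j ∈ Finset.range (2*k), n ^ j ≤ 2 * k * n ^ (2*k-1) := by
      have h := Finset.sum_le_card_nsmul (Finset.range (2*k)) (fun j => n ^ j) (n ^ (2*k-1))
        (fun j hj => Nat.pow_le_pow_right hn (by
          rw [Finset.mem_range] at hj; omega))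
      simpa [Finset.card_range, smul_eq_mul] using h
    have h22 : 2*(2*k*n^(2*k-1)) = 4*k*n^(2*k-1) := by ring
    have hcard : Fk.card ≤ 4 * k * n ^ (2*k-1) := by
      calc Fk.card ≤ 2 * Q.card := hc
        _ ≤ 2*(2*k*n^(2*k-1)) := Nat.mul_le_mul_left 2 (le_trans hQ hgeom)
        _ = 4*k*n^(2*k-1) := h22
    have hval : ∀ v ∈ Fk, φ v = Real.exp (-τ) ^ k := by
      intro v hv
      have hvk : ‖v‖^2 = (k:ℝ) := by
        rw [← real_inner_self_eq_norm_sq, (hFkmem v hv).2]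
      show Real.exp (-τ * ‖v‖^2) = _
      rw [hvk, mul_comm, Real.exp_nat_mul]
    rw [Finset.sum_congr rfl hval, Finset.sum_const, nsmul_eq_mul]
    calc (Fk.card : ℝ) * Real.exp (-τ) ^ k
        ≤ ((4 * k * n ^ (2*k-1) : ℕ) : ℝ) * Real.exp (-τ) ^ k := by
          apply mul_le_mul_of_nonneg_right _ (by positivity)
          exact_mod_cast hcard
      _ ≤ 4 * (1/2:ℝ)^k / n := by
          rw [hq]
          push_cast
          exact arith n k hn hk1
  have hgeo : ∑ k ∈ S, (1/2:ℝ)^k ≤ 1 := by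
    have h2 := Summable.sum_le_tsum (insert 0 S) (fun i _ => by positivity) summable_geometric_two
    rw [tsum_geometric_two, Finset.sum_insert h0S] at h2
    norm_num at h2
    linarith
  have hsum2 : ∑ v ∈ F, φ v ≤ 4 / n := by
    rw [← hfib]
    calc ∑ k ∈ S, ∑ v ∈ F.filter (fun v => ν v = k), φ v
        ≤ ∑ k ∈ S, 4 * (1/2:ℝ)^k / n := Finset.sum_le_sum hfiber_bound
      _ = (4/(n:ℝ)) * ∑ k ∈ S, (1/2:ℝ)^k := by
          rw [Finset.mul_sum]
          exact Finset.sum_congr rfl (fun k _ => by ring)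
      _ ≤ (4/(n:ℝ)) * 1 := mul_le_mul_of_nonneg_left hgeo (by positivity)
      _ = 4 / n := mul_one _
  show ∑ y ∈ G, φ (y : V n) ≤ 1 + 4 / n
  rw [himg]
  linarith


end IntegralGaussAux

open IntegralGaussAux in
/-- There is a universal constant `C > 0` such that for every integral lattice
`L ⊂ ℝ^n`, the Gaussian mass at parameter `τ* = 2 log (2n)` converges and satisfies
`∑_{y ∈ L} exp(-τ* ‖y‖²) ≤ 1 + C/n`. -/
theorem integral_lattice_gaussian_mass :
    ∃ C : ℝ, 0 < C ∧
      ∀ n : ℕ, 0 < n →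
        ∀ L : AddSubgroup (EuclideanSpace ℝ (Fin n)),
          DiscreteTopology L →
          (∀ x ∈ L, ∀ y ∈ L, ∃ m : ℤ, (inner ℝ x y : ℝ) = (m : ℝ)) →
          Summable (fun y : L =>
              Real.exp (-(2 * Real.log (2 * n)) * ‖(y : EuclideanSpace ℝ (Fin n))‖ ^ 2)) ∧
          (∑' y : L, Real.exp (-(2 * Real.log (2 * n)) * ‖(y : EuclideanSpace ℝ (Fin n))‖ ^ 2))
            ≤ 1 + C / n := by
  refine ⟨4, by norm_num, ?_⟩
  intro n hn L _ hint
  set f : ↥L → ℝ := fun y =>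
    Real.exp (-(2 * Real.log (2 * n)) * ‖(y : EuclideanSpace ℝ (Fin n))‖ ^ 2) with hf
  have hfpos : ∀ y, 0 ≤ f y := fun y => (Real.exp_pos _).le
  have hbound : ∀ G : Finset ↥L, ∑ y ∈ G, f y ≤ 1 + 4 / n := sum_bound n hn L hint
  set g : ↥L → ENNReal := fun y => ENNReal.ofReal (f y) with hg
  have h1 : (0:ℝ) ≤ 1 + 4 / n := by positivity
  have hgsum : ∑' y, g y ≤ ENNReal.ofReal (1 + 4 / n) := by
    rw [ENNReal.tsum_eq_iSup_sum]
    apply iSup_le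
    intro G
    rw [hg]
    rw [← ENNReal.ofReal_sum_of_nonneg (fun i _ => hfpos i)]
    exact ENNReal.ofReal_le_ofReal (hbound G)
  have hne : ∑' y, g y ≠ ⊤ := ne_top_of_le_ne_top ENNReal.ofReal_ne_top hgsum
  have hsummable : Summable f :=
    (ENNReal.summable_toReal hne).congr (fun y => ENNReal.toReal_ofReal (hfpos y))
  refine ⟨hsummable, ?_⟩
  have htsum : (∑' y, g y).toReal = ∑' y, f y := by
    rw [ENNReal.tsum_toReal_eq (fun a => ENNReal.ofReal_ne_top)]
    exact tsum_congr (fun y => ENNReal.toReal_ofReal (hfpos y))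
  rw [← htsum]
  calc (∑' y, g y).toReal ≤ (ENNReal.ofReal (1 + 4/(n:ℝ))).toReal :=
        ENNReal.toReal_mono ENNReal.ofReal_ne_top hgsum
    _ = 1 + 4 / n := ENNReal.toReal_ofReal h1
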